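/- (Monotonicity of log-determinant) Let L be an n×n real symmetric matrix with L ⪰ I (i.e., L − I is positive semidefinite). Then the set function f(Y) = log det(L_Y) is monotone nondecreasing: for every subset A ⊆ {1,…,n} and every j ∉ A, det(L_{A∪{j}}) ≥ det(L_A). -/

import Mathlib

open Matrix BigOperators

/-- The principal submatrix of `M` indexed by the subset `S`. -/
def principalSubmatrix {n : ℕ} (M : Matrix (Fin n) (Fin n) ℝ) (S : Finset (Fin n)) :
    Matrix {i // i ∈ S} {i // i ∈ S} ℝ :=
  M.submatrix (fun i => (i : Fin n)) (fun i => (i : Fin n))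

/-- Monotonicity of the log-determinant: if `L ⪰ I` (i.e. `L − I` is positive
semidefinite), then the set function `Y ↦ log det(L_Y)` is monotone nondecreasing:
for every `A` and `j ∉ A`, `det(L_{A∪{j}}) ≥ det(L_A)`. -/
theorem logdet_monotone {n : ℕ} (L : Matrix (Fin n) (Fin n) ℝ)
    (hL : (L - 1).PosSemidef) (A : Finset (Fin n)) (j : Fin n) (hj : j ∉ A) :
    (principalSubmatrix L (insert j A)).det ≥ (principalSubmatrix L A).det := by
  classical
  -- L is Hermitian
  have hLH : L.IsHermitian := by
    have := hL.1.add (Matrix.isHermitian_one (n := Fin n) (α := ℝ))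
    simpa using this
  set S : Finset (Fin n) := insert j A with hS
  -- the reindexing equivalence
  let f : Unit ⊕ {i // i ∈ A} ≃ {i // i ∈ S} :=
    { toFun := Sum.elim (fun _ => ⟨j, Finset.mem_insert_self j A⟩)
        (fun i => ⟨i, Finset.mem_insert_of_mem i.2⟩)
      invFun := fun i => if h : (i : Fin n) ∈ A then Sum.inr ⟨i, h⟩ else Sum.inl ()
      left_inv := by
        rintro (⟨⟩ | ⟨i, hi⟩)
        · simp [hj]
        · simp [hi]
      right_inv := by
        rintro ⟨i, hi⟩
        by_cases h : i ∈ A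
        · simp [h]
        · have hij : i = j := by
            rcases Finset.mem_insert.mp hi with h' | h'
            · exact h'
            · exact absurd h' h
          subst hij
          simp [hj] }
  -- blocks
  set a : Matrix Unit Unit ℝ := Matrix.of fun _ _ => L j j with ha
  set b : Matrix Unit {i // i ∈ A} ℝ := Matrix.of fun _ i => L j (i : Fin n) with hb
  set D : Matrix {i // i ∈ A} {i // i ∈ A} ℝ := principalSubmatrix L A with hD
  have hblock : (principalSubmatrix L S).submatrix f f = fromBlocks a b bᴴ D := by
    ext x y
    rcases x with x | x <;> rcases y with y | y <;>
      simp [principalSubmatrix, fromBlocks, f, a, b, D, Matrix.conjTranspose_apply]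
    exact (congrFun (congrFun hLH.eq _) _).symm ▸ rfl
  -- D - 1 is PSD, hence D is PosDef
  have hD1 : (D - 1).PosSemidef := by
    have h1 : (D - 1) = (L - 1).submatrix (fun i : {i // i ∈ A} => (i : Fin n))
        (fun i : {i // i ∈ A} => (i : Fin n)) := by
      ext x y
      simp [D, principalSubmatrix, Matrix.one_apply]
    rw [h1]
    exact hL.submatrix _
  have hDpos : D.PosDef := by
    have := Matrix.PosDef.posSemidef_add hD1 (Matrix.PosDef.one (n := {i // i ∈ A}) (R := ℝ))
    simpa using this
  haveI : Invertible D := hDpos.isUnit.invertible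
  -- the shifted block matrix is PSD
  have hshift : (fromBlocks (a - 1) b bᴴ (D - 1)).PosSemidef := by
    have h2 : fromBlocks (a - 1) b bᴴ (D - 1)
        = (principalSubmatrix (L - 1) S).submatrix f f := by
      ext x y
      rcases x with x | x <;> rcases y with y | y <;>
        simp [principalSubmatrix, fromBlocks, f, a, b, D, Matrix.conjTranspose_apply,
          Matrix.one_apply]
      · rw [if_neg (fun h : j = (y : Fin n) => hj (h ▸ y.2)), sub_zero]
      · rw [if_neg (fun h : (x : Fin n) = j => hj (h ▸ x.2)), sub_zero]
        exact congrFun (congrFun hLH.eq _) _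
    rw [h2]
    exact (hL.submatrix _).submatrix _
  have hPSD : (fromBlocks (a - 1) b bᴴ D).PosSemidef := by
    have h3 : fromBlocks (a - 1) b bᴴ D
        = fromBlocks (a - 1) b bᴴ (D - 1) + fromBlocks 0 0 0 1 := by
      rw [Matrix.fromBlocks_add]
      simp
    rw [h3]
    refine hshift.add ?_
    have h4 : (fromBlocks (0 : Matrix Unit Unit ℝ) 0 0 (1 : Matrix {i // i ∈ A} _ ℝ))
        = Matrix.diagonal (Sum.elim (0 : Unit → ℝ) (1 : {i // i ∈ A} → ℝ)) := by
      rw [← Matrix.diagonal_zero, ← Matrix.diagonal_one, Matrix.fromBlocks_diagonal]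
      rfl
    rw [h4]
    refine Matrix.posSemidef_diagonal_iff.mpr ?_
    rintro (x | x) <;> simp
  -- Schur complement bound
  have hschur : ((a - 1) - b * D⁻¹ * bᴴ).PosSemidef :=
    (Matrix.PosDef.fromBlocks₂₂ (a - 1) b hDpos).mp hPSD
  have hentry : (1 : ℝ) ≤ (a - b * D⁻¹ * bᴴ) () () := by
    have := hschur.dotProduct_mulVec_nonneg (fun _ => 1)
    simp [Matrix.mulVec, dotProduct, Matrix.sub_apply, Matrix.one_apply] at this ⊢
    linarith
  -- determinant computation
  have hdet : (principalSubmatrix L S).det = D.det * (a - b * D⁻¹ * bᴴ) () () := by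
    rw [← Matrix.det_submatrix_equiv_self f, hblock, Matrix.det_fromBlocks₂₂,
      Matrix.invOf_eq_nonsing_inv]
    congr 1
    rw [Matrix.det_unique]
  rw [hdet]
  calc D.det = D.det * 1 := by ring
    _ ≤ D.det * (a - b * D⁻¹ * bᴴ) () () :=
      mul_le_mul_of_nonneg_left hentry hDpos.det_pos.le
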